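/- Let 0 < ℓ1 ≤ ℓ2 and let C > 0, β ∈ (0,1], ε ∈ (0,1). Then there exists δ1 > 0, depending only on ℓ1, ℓ2, C, β and ε, such that the following holds: for every differentiable F : ℝ → ℝ with F(0) = 0 and ℓ1 ≤ F'(z) ≤ ℓ2 for all z ∈ ℝ, every y ∈ [ε, 1 − ε], every v ∈ [0, 1] and every δ ∈ (0, δ1], if ℓ := ∫_0^1 F'(λ v) dλ (so that ℓ ∈ [ℓ1, ℓ2] and ℓ·v = F(v)) and |v − ψ(F(y)/ℓ)| ≤ C·δ^β, then |v − y| < ε. -/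

import Mathlib

/-- `ψ(e) = e·1_{[0,1]}(e) + 1_{(1,∞)}(e)`. -/
noncomputable def psi (e : ℝ) : ℝ := if e < 0 then 0 else if e ≤ 1 then e else 1

lemma stmt_9_growth (ℓ1 : ℝ) (F F' : ℝ → ℝ) (hF : ∀ z, HasDerivAt F (F' z) z)
    (hl : ∀ z, ℓ1 ≤ F' z) {a b : ℝ} (hab : a ≤ b) : ℓ1 * (b - a) ≤ F b - F a := by
  have hG' : ∀ z, HasDerivAt (fun z => F z - ℓ1 * z) (F' z - ℓ1) z := by
    intro z
    exact ((hF z).sub ((hasDerivAt_id z).const_mul ℓ1)).congr_deriv (by simp)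
  have hmono : Monotone (fun z => F z - ℓ1 * z) := by
    apply monotone_of_deriv_nonneg
    · exact fun z => ((hG' z).differentiableAt)
    · intro z
      rw [(hG' z).deriv]
      linarith [hl z]
  have := hmono hab
  simp only at this
  linarith

lemma stmt_9_int (ℓ1 ℓ2 : ℝ) (F F' : ℝ → ℝ) (hF : ∀ z, HasDerivAt F (F' z) z)
    (hl : ∀ z, ℓ1 ≤ F' z) (hu : ∀ z, F' z ≤ ℓ2) (h0 : 0 < ℓ1) (v : ℝ) :
    IntervalIntegrable (fun l => F' (l * v)) MeasureTheory.volume 0 1 := by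
  have hd : F' = deriv F := funext fun z => ((hF z).deriv).symm
  have hm : Measurable fun l : ℝ => F' (l * v) := by
    rw [hd]; exact (measurable_deriv F).comp (measurable_id.mul_const v)
  apply (intervalIntegrable_const (c := ℓ2)).mono_fun' hm.aestronglyMeasurable
  filter_upwards with x
  rw [Real.norm_eq_abs, abs_of_pos (lt_of_lt_of_le h0 (hl _))]
  exact hu _

/-- Real-variable content of Lemma `lem:26:2:1`: there is `δ1 > 0`, depending only
on `ℓ1, ℓ2, C, β, ε`, such that for every differentiable `F` with `F(0) = 0` and
`ℓ1 ≤ F' ≤ ℓ2`, every `y ∈ [ε, 1-ε]`, `v ∈ [0,1]` and `δ ∈ (0, δ1]`, with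
`ℓ = ∫_0^1 F'(λ v) dλ`, if `|v - ψ(F(y)/ℓ)| ≤ C δ^β` then `|v - y| < ε`. -/
theorem stmt_9 (ℓ1 ℓ2 C β ε : ℝ) (hℓ1 : 0 < ℓ1) (hℓ12 : ℓ1 ≤ ℓ2) (hC : 0 < C)
    (hβ0 : 0 < β) (hβ1 : β ≤ 1) (hε0 : 0 < ε) (hε1 : ε < 1) :
    ∃ δ1 > (0 : ℝ), ∀ F F' : ℝ → ℝ,
      (∀ z : ℝ, HasDerivAt F (F' z) z) → F 0 = 0 →
      (∀ z : ℝ, ℓ1 ≤ F' z) → (∀ z : ℝ, F' z ≤ ℓ2) →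
      ∀ y ∈ Set.Icc ε (1 - ε), ∀ v ∈ Set.Icc (0 : ℝ) 1, ∀ δ : ℝ, 0 < δ → δ ≤ δ1 →
        |v - psi (F y / ∫ l in (0 : ℝ)..1, F' (l * v))| ≤ C * δ ^ β →
        |v - y| < ε := by
  have hℓ2 : 0 < ℓ2 := lt_of_lt_of_le hℓ1 hℓ12
  set a : ℝ := ε * ℓ1 / (2 * ℓ2 * C) with ha
  have ha0 : 0 < a := by positivity
  refine ⟨a ^ (1 / β), Real.rpow_pos_of_pos ha0 _, ?_⟩
  intro F F' hF hF0 hl hu y hy v hv δ hδ0 hδ1 hclose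
  obtain ⟨hyε, hy1⟩ := hy
  obtain ⟨hv0, hv1⟩ := hv
  -- bound on C δ^β
  have hδβ : C * δ ^ β ≤ ε * ℓ1 / (2 * ℓ2) := by
    have h1 : δ ^ β ≤ (a ^ (1 / β)) ^ β :=
      Real.rpow_le_rpow hδ0.le hδ1 hβ0.le
    have h2 : (a ^ (1 / β)) ^ β = a := by
      rw [← Real.rpow_mul ha0.le, one_div_mul_cancel hβ0.ne', Real.rpow_one]
    have h3 : δ ^ β ≤ a := h2 ▸ h1
    calc C * δ ^ β ≤ C * a := by nlinarith
      _ = ε * ℓ1 / (2 * ℓ2) := by rw [ha]; field_simp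
  have hεbound : C * δ ^ β ≤ ε / 2 := by
    have : ε * ℓ1 / (2 * ℓ2) ≤ ε / 2 := by
      rw [div_le_div_iff₀ (by positivity) (by positivity)]
      nlinarith
    linarith
  -- the integral ℓ
  set ℓ : ℝ := ∫ l in (0:ℝ)..1, F' (l * v) with hℓdef
  have hint := stmt_9_int ℓ1 ℓ2 F F' hF hl hu hℓ1 v
  have hℓlo : ℓ1 ≤ ℓ := by
    have := intervalIntegral.integral_mono_on (by norm_num : (0:ℝ) ≤ 1)
      intervalIntegrable_const hint (fun x _ => hl (x * v))
    simpa using this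
  have hℓhi : ℓ ≤ ℓ2 := by
    have := intervalIntegral.integral_mono_on (by norm_num : (0:ℝ) ≤ 1)
      hint intervalIntegrable_const (fun x _ => hu (x * v))
    simpa using this
  have hℓ0 : 0 < ℓ := lt_of_lt_of_le hℓ1 hℓlo
  -- ℓ * v = F v
  have hℓv : ℓ * v = F v := by
    have h : ∀ x ∈ Set.uIcc (0:ℝ) 1, HasDerivAt (fun l => F (l * v)) (F' (x * v) * v) x := by
      intro x _
      simpa only [Function.comp_def, id, one_mul] using (hF (x * v)).comp x ((hasDerivAt_id x).mul_const v)
    have := intervalIntegral.integral_eq_sub_of_hasDerivAt h (hint.mul_const v)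
    simp only [one_mul, zero_mul, hF0, sub_zero] at this
    rw [intervalIntegral.integral_mul_const] at this
    exact this
  clear_value ℓ
  clear hℓdef hint
  -- F y > 0
  have hFy : ℓ1 * y ≤ F y := by
    have := stmt_9_growth ℓ1 F F' hF hl (le_trans hε0.le hyε)
    simpa [hF0] using this
  have hFy0 : 0 < F y := lt_of_lt_of_le (by nlinarith) hFy
  have hpos : ¬ (F y / ℓ < 0) := by
    push_neg
    positivity
  by_cases hle : F y / ℓ ≤ 1
  · -- case ψ = F y / ℓ
    rw [psi, if_neg hpos, if_pos hle] at hclose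
    have hkey : |F v - F y| ≤ ℓ2 * (C * δ ^ β) := by
      have : F v - F y = ℓ * (v - F y / ℓ) := by
        field_simp [← hℓv]
        linarith [hℓv]
      rw [this, abs_mul, abs_of_pos hℓ0]
      have := abs_nonneg (v - F y / ℓ)
      nlinarith
    have hlow : ℓ1 * |v - y| ≤ |F v - F y| := by
      rcases le_total v y with h | h
      · have h2 := stmt_9_growth ℓ1 F F' hF hl h
        rw [abs_sub_comm, abs_of_nonneg (by linarith), abs_sub_comm]
        exact le_trans h2 (le_abs_self _)
      · have := stmt_9_growth ℓ1 F F' hF hl h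
        rw [abs_of_nonneg (by linarith)]
        exact le_trans this (le_abs_self _)
    have : ℓ1 * |v - y| ≤ ℓ2 * (ε * ℓ1 / (2 * ℓ2)) := by
      calc ℓ1 * |v - y| ≤ |F v - F y| := hlow
        _ ≤ ℓ2 * (C * δ ^ β) := hkey
        _ ≤ ℓ2 * (ε * ℓ1 / (2 * ℓ2)) := by nlinarith
    have h4 : ℓ2 * (ε * ℓ1 / (2 * ℓ2)) = ℓ1 * (ε / 2) := by field_simp
    rw [h4] at this
    have : |v - y| ≤ ε / 2 := le_of_mul_le_mul_left (by linarith) hℓ1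
    linarith
  · -- case ψ = 1: impossible
    push_neg at hle
    rw [psi, if_neg hpos, if_neg (not_le.mpr hle)] at hclose
    have hv1' : 1 - (ε / 2) ≤ v := by
      have := abs_le.mp hclose
      linarith [this.1]
    -- F y > ℓ ≥ ℓ v = F v, so v < y
    have hFylt : ℓ < F y := (one_lt_div hℓ0).mp hle
    have hFv : F v ≤ ℓ := by
      rw [← hℓv]
      calc ℓ * v ≤ ℓ * 1 := mul_le_mul_of_nonneg_left hv1 hℓ0.le
        _ = ℓ := mul_one ℓ
    have hvy : v < y := by
      by_contra hcon
      push_neg at hcon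
      have hg := stmt_9_growth ℓ1 F F' hF hl hcon
      have h0' : 0 ≤ ℓ1 * (v - y) := mul_nonneg hℓ1.le (by linarith)
      linarith
    -- but y ≤ 1 - ε and v ≥ 1 - ε/2: contradiction
    linarith
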